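/- Let P(x) = x^m + (1/2)x^{m-2} + lower order terms be a polynomial over C, λ ≠ 0 a complex number, and suppose P(x)^2 + λ = Q(x)^2 S(x) where Q is monic of degree m-1 with distinct roots and S is a monic quadratic. If R(x) is a polynomial of degree at most m-3 and λ' ∈ C are such that Q(x) divides 2P(x)R(x) + λ', then R = 0 and λ' = 0. -/
import Mathlib


open Polynomial

/-- Let P(x) = x^m + (1/2)x^{m-2} + lower order terms over ℂ, λ ≠ 0, and suppose
P^2 + λ = Q^2 S with Q monic of degree m-1 with distinct roots and S a monic
quadratic. If deg R ≤ m-3 and Q divides 2PR + λ', then R = 0 and λ' = 0. -/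
theorem stmt5 (m : ℕ) (hm : 2 ≤ m) (P Q S R : Polynomial ℂ) (lam lam' : ℂ)
    (hlam : lam ≠ 0)
    (hPmon : P.Monic) (hPdeg : P.natDegree = m) (hP1 : P.coeff (m - 1) = 0)
    (hP2 : P.coeff (m - 2) = 1 / 2)
    (hQmon : Q.Monic) (hQdeg : Q.natDegree = m - 1) (hQsf : Squarefree Q)
    (hSmon : S.Monic) (hSdeg : S.natDegree = 2)
    (hfac : P ^ 2 + C lam = Q ^ 2 * S)
    (hR : R.degree < ((m - 2 : ℕ) : WithBot ℕ))
    (hdvd : Q ∣ (2 * P * R + C lam')) :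
    R = 0 ∧ lam' = 0 := by
  have hQne : Q ≠ 0 := hQmon.ne_zero
  by_cases hR0 : R = 0
  · subst hR0
    refine ⟨rfl, ?_⟩
    simp only [mul_zero, zero_add] at hdvd
    have hdegQ : Q.degree = ((m - 1 : ℕ) : WithBot ℕ) := by
      rw [degree_eq_natDegree hQne, hQdeg]
    have hlt : (C lam').degree < Q.degree := by
      rw [hdegQ]
      refine lt_of_le_of_lt (degree_C_le) ?_
      exact_mod_cast (by omega : 0 < m - 1)
    have := eq_zero_of_dvd_of_degree_lt hdvd hlt
    exact_mod_cast (C_eq_zero.mp this)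
  · exfalso
    -- degree of R
    have hdR : R.natDegree ≤ m - 3 := by
      have : (R.natDegree : WithBot ℕ) < ((m - 2 : ℕ) : WithBot ℕ) := by
        rwa [degree_eq_natDegree hR0] at hR
      have := Nat.cast_lt.mp (this)
      omega
    have hm3 : 3 ≤ m := by
      have : (R.natDegree : WithBot ℕ) < ((m - 2 : ℕ) : WithBot ℕ) := by
        rwa [degree_eq_natDegree hR0] at hR
      have := Nat.cast_lt.mp this
      omega
    set E : Polynomial ℂ := C (-4*lam) * R^2 + C (4*lam') * (P*R) + C (lam'^2) with hE
    have h2 : (2*P*R + C lam')^2 = Q^2 * (4*S*R^2) + E := by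
      rw [hE]
      simp only [map_mul, map_neg, map_ofNat, map_pow]
      linear_combination (4*R^2 : Polynomial ℂ) * hfac
    have h1 : Q^2 ∣ (2*P*R + C lam')^2 := pow_dvd_pow_of_dvd hdvd 2
    have hdvdE : Q^2 ∣ E := by
      rw [h2] at h1
      exact (dvd_add_right (dvd_mul_right _ _)).mp h1
    have hQ2deg : (Q^2).degree = ((2*(m-1) : ℕ) : WithBot ℕ) := by
      rw [degree_eq_natDegree (pow_ne_zero 2 hQne), natDegree_pow, hQdeg, mul_comm]
    have hEdeg : E.natDegree < 2*(m-1) := by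
      have b1 : (C (-4*lam) * R^2).natDegree ≤ 0 + 2 * R.natDegree := by
        refine natDegree_mul_le.trans (add_le_add (natDegree_C _).le ?_)
        simp [natDegree_pow]
      have b2 : (C (4*lam') * (P*R)).natDegree ≤ 0 + (m + R.natDegree) := by
        refine natDegree_mul_le.trans (add_le_add (natDegree_C _).le ?_)
        refine natDegree_mul_le.trans ?_
        rw [hPdeg]
      have b3 : (C (lam'^2)).natDegree = 0 := natDegree_C _
      have := natDegree_add_le (C (-4*lam) * R^2 + C (4*lam') * (P*R)) (C (lam'^2))
      have := natDegree_add_le (C (-4*lam) * R^2) (C (4*lam') * (P*R))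
      rw [hE]
      omega
    have hEzero : E = 0 := by
      by_cases hE0 : E = 0
      · exact hE0
      · refine eq_zero_of_dvd_of_degree_lt hdvdE ?_
        rw [hQ2deg, degree_eq_natDegree hE0]
        exact_mod_cast hEdeg
    by_cases hl' : lam' = 0
    · -- E = C (-4 lam) * R^2 = 0 forces R = 0, contradiction
      subst hl'
      rw [hE] at hEzero
      simp only [mul_zero, map_zero, zero_mul, add_zero, ne_eq, zero_pow] at hEzero
      have : C (-4*lam) * R^2 = 0 := by simpa using hEzero
      rcases mul_eq_zero.mp this with h | h
      · exact hlam (by simpa using C_eq_zero.mp h)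
      · exact hR0 (pow_eq_zero_iff (n := 2) (by norm_num) |>.mp h)
    · -- degree comparison contradiction
      have heq : C (4*lam') * (P*R) = C (4*lam) * R^2 - C (lam'^2) := by
        rw [hE] at hEzero
        simp only [map_mul, map_neg, map_ofNat, map_pow] at hEzero ⊢
        linear_combination hEzero
      have hLne : C (4*lam') * (P*R) ≠ 0 := by
        apply mul_ne_zero
        · simpa using (by exact mul_ne_zero (by norm_num) hl' : (4:ℂ)*lam' ≠ 0)
        · exact mul_ne_zero hPmon.ne_zero hR0
      have hLdeg : (C (4*lam') * (P*R)).natDegree = m + R.natDegree := by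
        rw [natDegree_C_mul (by exact mul_ne_zero (by norm_num) hl'),
          natDegree_mul hPmon.ne_zero hR0, hPdeg]
      have hRdeg : (C (4*lam) * R^2 - C (lam'^2)).natDegree ≤ 2 * R.natDegree := by
        refine (natDegree_sub_le _ _).trans ?_
        have b1 : (C (4*lam) * R^2).natDegree ≤ 0 + 2 * R.natDegree := by
          refine natDegree_mul_le.trans (add_le_add (natDegree_C _).le ?_)
          simp [natDegree_pow]
        have b3 : (C (lam'^2)).natDegree = 0 := natDegree_C _
        omega
      rw [heq] at hLdeg
      omega
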